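/- Let λ₁λ₂ > 0, Q(u) = (λ₁u₁² + λ₂u₂²)/2, X(u) = (u₁,u₂,Q(u)), and let U₀ ⊂ ℝ² be a compact set. For a unit vector v ∈ ℝ³ define h_v(u) := n_Q(u)·v. Then there exists c > 0, depending only on λ₁, λ₂, and U₀, such that for every unit vector v ∈ ℝ³, every u ∈ U₀ with h_v(u) = 0, and every w ∈ ℝ² with |w| = 1 and ∇_u h_v(u)·w = 0, one has |π_v(DX(u)w)| ≥ c, where DX(u)w = (w₁, w₂, λ₁u₁w₁ + λ₂u₂w₂) is the differential of X at u applied to w and π_v is the orthogonal projection of ℝ³ onto v^⊥. -/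

import Mathlib

noncomputable section
open MeasureTheory Metric Set Function
open scoped ENNReal RealInnerProductSpace

abbrev E3 : Type := EuclideanSpace ℝ (Fin 3)
abbrev E2 : Type := EuclideanSpace ℝ (Fin 2)

def mk3 (a b c : ℝ) : E3 := (WithLp.equiv 2 (Fin 3 → ℝ)).symm ![a, b, c]

/-- Unit normal of the quadratic graph at `X(u)`. -/
def nQ (l₁ l₂ : ℝ) (u : E2) : E3 :=
  (Real.sqrt (1 + l₁ ^ 2 * (u 0) ^ 2 + l₂ ^ 2 * (u 1) ^ 2))⁻¹ •
    mk3 (-(l₁ * u 0)) (-(l₂ * u 1)) 1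

/-- The tangency function `h_v(u) = n_Q(u)·v`. -/
def hFun (l₁ l₂ : ℝ) (v : E3) (u : E2) : ℝ := ⟪nQ l₁ l₂ u, v⟫

/-- The differential of `X` at `u` applied to `w`: `DX(u)w = (w₁, w₂, l₁u₁w₁ + l₂u₂w₂)`. -/
def DX (l₁ l₂ : ℝ) (u : E2) (w : E2) : E3 :=
  mk3 (w 0) (w 1) (l₁ * u 0 * w 0 + l₂ * u 1 * w 1)

/-- Orthogonal projection onto the plane `v^⊥`. -/
def projPerp (v x : E3) : E3 := x - ⟪x, v⟫ • v

/- ### Auxiliary lemmas -/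

lemma aux_sfun_pos (l₁ l₂ : ℝ) (u : E2) :
    0 < 1 + l₁ ^ 2 * (u 0) ^ 2 + l₂ ^ 2 * (u 1) ^ 2 := by positivity

lemma aux_hFun_eq (l₁ l₂ : ℝ) (v : E3) (u : E2) :
    hFun l₁ l₂ v u = (Real.sqrt (1 + l₁ ^ 2 * (u 0) ^ 2 + l₂ ^ 2 * (u 1) ^ 2))⁻¹ *
      (-(l₁ * u 0) * v 0 + (-(l₂ * u 1) * v 1 + 1 * v 2)) := by
  simp [hFun, nQ, mk3, PiLp.inner_apply, Fin.sum_univ_three, real_inner_smul_left, mul_add]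
  ring

lemma aux_hFun_zero (l₁ l₂ : ℝ) (v : E3) (u : E2) (hp : hFun l₁ l₂ v u = 0) :
    -(l₁ * u 0) * v 0 + (-(l₂ * u 1) * v 1 + 1 * v 2) = 0 := by
  have h2 : (Real.sqrt (1 + l₁ ^ 2 * (u 0) ^ 2 + l₂ ^ 2 * (u 1) ^ 2))⁻¹ *
      (-(l₁ * u 0) * v 0 + (-(l₂ * u 1) * v 1 + 1 * v 2)) = 0 := by
    rw [← aux_hFun_eq]; exact hp
  rcases mul_eq_zero.mp h2 with h | h
  · exact absurd h (by have := aux_sfun_pos l₁ l₂ u; positivity)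
  · exact h

lemma aux_grad_eq (l₁ l₂ : ℝ) (v : E3) (u : E2) (hp : hFun l₁ l₂ v u = 0) (w : E2)
    (hg : ⟪gradient (hFun l₁ l₂ v) u, w⟫ = 0) :
    l₁ * v 0 * w 0 + l₂ * v 1 * w 1 = 0 := by
  set s : E2 → ℝ := fun u => 1 + l₁ ^ 2 * (u 0) ^ 2 + l₂ ^ 2 * (u 1) ^ 2 with hs
  set p : E2 → ℝ := fun u => -(l₁ * u 0) * v 0 + (-(l₂ * u 1) * v 1 + 1 * v 2) with hpdef
  have hspos : 0 < s u := aux_sfun_pos l₁ l₂ u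
  have hsqpos : 0 < Real.sqrt (s u) := Real.sqrt_pos.mpr hspos
  have hpu : p u = 0 := aux_hFun_zero l₁ l₂ v u hp
  have h0 : HasFDerivAt (fun u : E2 => u 0) (EuclideanSpace.proj (0 : Fin 2) : E2 →L[ℝ] ℝ) u :=
    (EuclideanSpace.proj (0 : Fin 2) : E2 →L[ℝ] ℝ).hasFDerivAt
  have h1 : HasFDerivAt (fun u : E2 => u 1) (EuclideanSpace.proj (1 : Fin 2) : E2 →L[ℝ] ℝ) u :=
    (EuclideanSpace.proj (1 : Fin 2) : E2 →L[ℝ] ℝ).hasFDerivAt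
  set Ls := (l₁ ^ 2 * (2 * u 0)) • (EuclideanSpace.proj (0 : Fin 2) : E2 →L[ℝ] ℝ)
        + (l₂ ^ 2 * (2 * u 1)) • (EuclideanSpace.proj (1 : Fin 2) : E2 →L[ℝ] ℝ) with hLs
  set Lp := (-(l₁ * v 0)) • (EuclideanSpace.proj (0 : Fin 2) : E2 →L[ℝ] ℝ)
        + (-(l₂ * v 1)) • (EuclideanSpace.proj (1 : Fin 2) : E2 →L[ℝ] ℝ) with hLp
  have hsder : HasFDerivAt s Ls u := by
    have := (((h0.mul h0).const_mul (l₁ ^ 2)).add ((h1.mul h1).const_mul (l₂ ^ 2))).const_add 1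
    refine (this.congr_of_eventuallyEq (Filter.Eventually.of_forall fun x => ?_)).congr_fderiv ?_
    · simp [hs]; ring
    · rw [hLs]; ext z; simp; ring
  have hpder : HasFDerivAt p Lp u := by
    have := ((h0.const_mul (-(l₁ * v 0))).add (h1.const_mul (-(l₂ * v 1)))).add_const (1 * v 2)
    refine this.congr_of_eventuallyEq (Filter.Eventually.of_forall fun x => ?_)
    · simp [hpdef]; ring
  have hφ : HasDerivAt (fun t : ℝ => (Real.sqrt t)⁻¹)
      (-(1 / (2 * Real.sqrt (s u))) / Real.sqrt (s u) ^ 2) (s u) :=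
    (Real.hasDerivAt_sqrt (ne_of_gt hspos)).inv (ne_of_gt hsqpos)
  have hinv : HasFDerivAt (fun u => (Real.sqrt (s u))⁻¹)
      ((-(1 / (2 * Real.sqrt (s u))) / Real.sqrt (s u) ^ 2) • Ls) u :=
    hφ.comp_hasFDerivAt u hsder
  have hmul : HasFDerivAt (fun u => (Real.sqrt (s u))⁻¹ * p u)
      ((Real.sqrt (s u))⁻¹ • Lp
        + p u • ((-(1 / (2 * Real.sqrt (s u))) / Real.sqrt (s u) ^ 2) • Ls)) u :=
    hinv.mul hpder
  rw [hpu, zero_smul, add_zero] at hmul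
  have hfun_eq : hFun l₁ l₂ v = fun u => (Real.sqrt (s u))⁻¹ * p u := by
    funext x; exact aux_hFun_eq l₁ l₂ v x
  have hgradat : HasGradientAt (hFun l₁ l₂ v)
      ((InnerProductSpace.toDual ℝ E2).symm ((Real.sqrt (s u))⁻¹ • Lp)) u := by
    rw [hfun_eq]
    exact hasFDerivAt_iff_hasGradientAt.mp hmul
  rw [hgradat.gradient, InnerProductSpace.toDual_symm_apply] at hg
  rw [hLp] at hg
  simp only [ContinuousLinearMap.add_apply, ContinuousLinearMap.coe_smul', Pi.smul_apply,
    PiLp.proj_apply, smul_eq_mul] at hg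
  have hg2 : (Real.sqrt (s u))⁻¹ * (l₁ * v 0 * w 0 + l₂ * v 1 * w 1) = 0 := by
    linear_combination -hg
  rcases mul_eq_zero.mp hg2 with h | h
  · exact absurd h (by positivity)
  · exact h

lemma aux_mk3_continuous {α : Type*} [TopologicalSpace α] {f g h : α → ℝ}
    (hf : Continuous f) (hg : Continuous g) (hh : Continuous h) :
    Continuous fun u => mk3 (f u) (g u) (h u) := by
  have h1 : Continuous fun u : α => (![f u, g u, h u] : Fin 3 → ℝ) := by
    apply continuous_pi
    intro i
    fin_cases i <;> simpa
  exact (PiLp.continuousLinearEquiv 2 ℝ (fun _ : Fin 3 => ℝ)).symm.continuous.comp h1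

set_option maxHeartbeats 1000000 in
lemma aux_main (l₁ l₂ : ℝ) (hl : 0 < l₁ * l₂)
    (U₀ : Set E2) (hU₀ : IsCompact U₀) :
    ∃ c : ℝ, 0 < c ∧
      ∀ v : E3, ‖v‖ = 1 → ∀ u ∈ U₀, (-(l₁ * u 0) * v 0 + (-(l₂ * u 1) * v 1 + 1 * v 2) = 0) →
        ∀ w : E2, ‖w‖ = 1 → (l₁ * v 0 * w 0 + l₂ * v 1 * w 1 = 0) →
          c ≤ ‖projPerp v (DX l₁ l₂ u w)‖ := by
  set S : Set (E3 × E2 × E2) := {x | ‖x.1‖ = 1 ∧ x.2.1 ∈ U₀ ∧ ‖x.2.2‖ = 1 ∧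
      (-(l₁ * x.2.1 0) * x.1 0 + (-(l₂ * x.2.1 1) * x.1 1 + 1 * x.1 2) = 0) ∧
      (l₁ * x.1 0 * x.2.2 0 + l₂ * x.1 1 * x.2.2 1 = 0)} with hS
  have hc1 : ∀ i : Fin 3, Continuous fun x : E3 × E2 × E2 => x.1 i := fun i =>
    ((EuclideanSpace.proj i : E3 →L[ℝ] ℝ).continuous).comp continuous_fst
  have hcu : ∀ i : Fin 2, Continuous fun x : E3 × E2 × E2 => x.2.1 i := fun i =>
    ((EuclideanSpace.proj i : E2 →L[ℝ] ℝ).continuous).comp (continuous_fst.comp continuous_snd)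
  have hcw : ∀ i : Fin 2, Continuous fun x : E3 × E2 × E2 => x.2.2 i := fun i =>
    ((EuclideanSpace.proj i : E2 →L[ℝ] ℝ).continuous).comp (continuous_snd.comp continuous_snd)
  have hDX : Continuous fun x : E3 × E2 × E2 => DX l₁ l₂ x.2.1 x.2.2 := by
    unfold DX
    exact aux_mk3_continuous (hcw 0) (hcw 1)
      (((continuous_const.mul (hcu 0)).mul (hcw 0)).add
        ((continuous_const.mul (hcu 1)).mul (hcw 1)))
  have hfcont : Continuous fun x : E3 × E2 × E2 => ‖projPerp x.1 (DX l₁ l₂ x.2.1 x.2.2)‖ := by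
    unfold projPerp
    exact (hDX.sub ((hDX.inner (𝕜 := ℝ) continuous_fst).smul continuous_fst)).norm
  have hScl : IsClosed S := by
    rw [hS]
    apply IsClosed.inter
    · exact isClosed_eq (continuous_norm.comp continuous_fst) continuous_const
    apply IsClosed.inter
    · exact hU₀.isClosed.preimage (continuous_fst.comp continuous_snd)
    apply IsClosed.inter
    · exact isClosed_eq (continuous_norm.comp (continuous_snd.comp continuous_snd)) continuous_const
    apply IsClosed.inter
    · apply isClosed_eq _ continuous_const
      exact ((continuous_const.mul (hcu 0)).neg.mul (hc1 0)).add
        (((continuous_const.mul (hcu 1)).neg.mul (hc1 1)).add (continuous_const.mul (hc1 2)))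
    · apply isClosed_eq _ continuous_const
      exact ((continuous_const.mul (hc1 0)).mul (hcw 0)).add
        ((continuous_const.mul (hc1 1)).mul (hcw 1))
  have hSsub : S ⊆ (sphere (0 : E3) 1) ×ˢ (U₀ ×ˢ sphere (0 : E2) 1) := by
    rintro ⟨v, u, w⟩ ⟨h1, h2, h3, -⟩
    exact ⟨by simpa [mem_sphere_iff_norm] using h1, h2, by simpa [mem_sphere_iff_norm] using h3⟩
  have hScomp : IsCompact S :=
    ((isCompact_sphere (0 : E3) 1).prod
      (hU₀.prod (isCompact_sphere (0 : E2) 1))).of_isClosed_subset hScl hSsub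
  have hpos : ∀ x ∈ S, 0 < ‖projPerp x.1 (DX l₁ l₂ x.2.1 x.2.2)‖ := by
    rintro ⟨v, u, w⟩ ⟨hv, hu, hw, hp, hgr⟩
    rw [norm_pos_iff]
    intro hzero
    have hT : DX l₁ l₂ u w = ⟪DX l₁ l₂ u w, v⟫ • v := by
      simpa [projPerp, sub_eq_zero] using hzero
    set a : ℝ := ⟪DX l₁ l₂ u w, v⟫ with ha
    have h0 : w 0 = a * v 0 := by
      have := congrFun (congrArg (fun (z : E3) => (z : Fin 3 → ℝ)) hT) 0
      simpa [DX, mk3] using this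
    have h1 : w 1 = a * v 1 := by
      have := congrFun (congrArg (fun (z : E3) => (z : Fin 3 → ℝ)) hT) 1
      simpa [DX, mk3] using this
    have key : l₁ * w 0 ^ 2 + l₂ * w 1 ^ 2 = 0 := by
      have h2 := congrArg (fun t => a * t) hgr
      simp only [mul_zero] at h2
      linear_combination h2 + (l₁ * w 0) * h0 + (l₂ * w 1) * h1
    have hl₁ : l₁ ≠ 0 := fun h => by simp [h] at hl
    have hl₂ : l₂ ≠ 0 := fun h => by simp [h] at hl
    have hw0 : w 0 = 0 ∧ w 1 = 0 := by
      constructor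
      · have k1 : l₁ ^ 2 * w 0 ^ 2 + (l₁ * l₂) * w 1 ^ 2 = 0 := by linear_combination l₁ * key
        have k2 : l₁ ^ 2 * w 0 ^ 2 = 0 :=
          le_antisymm (by nlinarith [mul_nonneg hl.le (sq_nonneg (w 1))]) (by positivity)
        rcases mul_eq_zero.mp k2 with h | h
        · exact absurd ((pow_eq_zero_iff two_ne_zero).mp h) hl₁
        · exact (pow_eq_zero_iff two_ne_zero).mp h
      · have k1 : (l₁ * l₂) * w 0 ^ 2 + l₂ ^ 2 * w 1 ^ 2 = 0 := by linear_combination l₂ * key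
        have k2 : l₂ ^ 2 * w 1 ^ 2 = 0 :=
          le_antisymm (by nlinarith [mul_nonneg hl.le (sq_nonneg (w 0))]) (by positivity)
        rcases mul_eq_zero.mp k2 with h | h
        · exact absurd ((pow_eq_zero_iff two_ne_zero).mp h) hl₂
        · exact (pow_eq_zero_iff two_ne_zero).mp h
    have : w = 0 := by
      ext i
      fin_cases i
      · simpa using hw0.1
      · simpa using hw0.2
    rw [this] at hw
    simp at hw
  by_cases hne : S.Nonempty
  · obtain ⟨x₀, hx₀, hmin⟩ := hScomp.exists_isMinOn hne hfcont.continuousOn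
    refine ⟨‖projPerp x₀.1 (DX l₁ l₂ x₀.2.1 x₀.2.2)‖, hpos x₀ hx₀, ?_⟩
    intro v hv u hu hp w hw hgr
    exact isMinOn_iff.mp hmin (v, u, w) ⟨hv, hu, hw, hp, hgr⟩
  · refine ⟨1, one_pos, ?_⟩
    intro v hv u hu hp w hw hgr
    exact absurd ⟨(v, u, w), hv, hu, hw, hp, hgr⟩ hne

/-- projective nondegeneracy of the elliptic tangency curve. -/
theorem tangency_curve_projection_nondegenerate (l₁ l₂ : ℝ) (hl : 0 < l₁ * l₂)
    (U₀ : Set E2) (hU₀ : IsCompact U₀) :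
    ∃ c : ℝ, 0 < c ∧
      ∀ v : E3, ‖v‖ = 1 → ∀ u ∈ U₀, hFun l₁ l₂ v u = 0 →
        ∀ w : E2, ‖w‖ = 1 → ⟪gradient (hFun l₁ l₂ v) u, w⟫ = 0 →
          c ≤ ‖projPerp v (DX l₁ l₂ u w)‖ := by
  obtain ⟨c, hc, hmain⟩ := aux_main l₁ l₂ hl U₀ hU₀
  refine ⟨c, hc, ?_⟩
  intro v hv u hu hp w hw hgr
  exact hmain v hv u hu (aux_hFun_zero l₁ l₂ v u hp) w hw (aux_grad_eq l₁ l₂ v u hp w hgr)
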